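/- Let β > 0, μ > 1 and f, g ∈ E_{(β,μ)}. Set ψ(m) = (2π)^{−1/2} (f ∗ g)(m). Then for all z ∈ H_β, F⁻¹(f)(z) · F⁻¹(g)(z) = F⁻¹(ψ)(z). -/

import Mathlib

open MeasureTheory

lemma stmt_7_aux_int (β μ : ℝ) (hβ : 0 < β) (hμ : 1 < μ) (h : ℝ → ℂ) (hc : Continuous h)
    (C : ℝ) (hb : ∀ x : ℝ, (1 + |x|) ^ μ * Real.exp (β * |x|) * ‖h x‖ ≤ C)
    (z : ℂ) (hz : |z.im| < β) :
    Integrable (fun m : ℝ => h m * Complex.exp (Complex.I * z * m)) := by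
  have hC : 0 ≤ C := by
    have h0 := hb 0
    simp at h0
    exact le_trans (norm_nonneg _) h0
  have hmaj : Integrable (fun x : ℝ => C * (1 + ‖x‖) ^ (-μ)) :=
    (integrable_one_add_norm (E := ℝ) (by simpa using hμ)).const_mul C
  refine hmaj.mono ?_ ?_
  · exact (hc.mul (by fun_prop)).aestronglyMeasurable
  · filter_upwards with x
    have hA : (0:ℝ) < (1 + |x|) ^ μ := by positivity
    have hB : (0:ℝ) < Real.exp (β * |x|) := Real.exp_pos _
    have hhx : ‖h x‖ ≤ C / ((1 + |x|) ^ μ * Real.exp (β * |x|)) := by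
      rw [le_div_iff₀ (by positivity)]
      calc ‖h x‖ * ((1 + |x|) ^ μ * Real.exp (β * |x|))
          = (1 + |x|) ^ μ * Real.exp (β * |x|) * ‖h x‖ := by ring
        _ ≤ C := hb x
    have hexp : ‖Complex.exp (Complex.I * z * x)‖ ≤ Real.exp (β * |x|) := by
      rw [Complex.norm_exp]
      apply Real.exp_le_exp.2
      have : (Complex.I * z * x).re = -(z.im * x) := by
        simp [Complex.mul_re, Complex.mul_im]
      rw [this]
      calc -(z.im * x) ≤ |z.im * x| := neg_le_abs _
        _ = |z.im| * |x| := abs_mul _ _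
        _ ≤ β * |x| := by
            exact mul_le_mul_of_nonneg_right hz.le (abs_nonneg x)
    rw [norm_mul]
    calc ‖h x‖ * ‖Complex.exp (Complex.I * z * x)‖
        ≤ (C / ((1 + |x|) ^ μ * Real.exp (β * |x|))) * Real.exp (β * |x|) :=
          mul_le_mul hhx hexp (norm_nonneg _) (by positivity)
      _ = C * ((1 + |x|) ^ μ)⁻¹ := by field_simp
      _ ≤ ‖C * (1 + ‖x‖) ^ (-μ)‖ := by
          simp only [Real.norm_eq_abs]
          rw [Real.rpow_neg (by positivity)]
          exact le_abs_self _

/-- Product formula for inverse Fourier transforms on the strip `H_β`: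
`F⁻¹(f)(z) F⁻¹(g)(z) = F⁻¹(ψ)(z)` where `ψ = (2π)^{-1/2} f ∗ g`. -/
theorem stmt_7 (β μ : ℝ) (hβ : 0 < β) (hμ : 1 < μ) (f g : ℝ → ℂ)
    (hf : Continuous f) (hg : Continuous g) (Cf Cg : ℝ)
    (hfb : ∀ x : ℝ, (1 + |x|) ^ μ * Real.exp (β * |x|) * ‖f x‖ ≤ Cf)
    (hgb : ∀ x : ℝ, (1 + |x|) ^ μ * Real.exp (β * |x|) * ‖g x‖ ≤ Cg)
    (z : ℂ) (hz : |z.im| < β) :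
    ((Real.sqrt (2 * Real.pi) : ℂ)⁻¹ *
        ∫ m : ℝ, f m * Complex.exp (Complex.I * z * m)) *
    ((Real.sqrt (2 * Real.pi) : ℂ)⁻¹ *
        ∫ m : ℝ, g m * Complex.exp (Complex.I * z * m))
    = (Real.sqrt (2 * Real.pi) : ℂ)⁻¹ *
        ∫ m : ℝ, ((Real.sqrt (2 * Real.pi) : ℂ)⁻¹ * ∫ y : ℝ, f (m - y) * g y)
          * Complex.exp (Complex.I * z * m) := by
  set F : ℝ → ℂ := fun m => f m * Complex.exp (Complex.I * z * m) with hF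
  set G : ℝ → ℂ := fun m => g m * Complex.exp (Complex.I * z * m) with hG
  have hFi : Integrable F := stmt_7_aux_int β μ hβ hμ f hf Cf hfb z hz
  have hGi : Integrable G := stmt_7_aux_int β μ hβ hμ g hg Cg hgb z hz
  have key : (∫ m, F m) * (∫ m, G m)
      = ∫ m : ℝ, (∫ y : ℝ, f (m - y) * g y) * Complex.exp (Complex.I * z * m) := by
    have conv := integral_convolution (ContinuousLinearMap.mul ℝ ℂ) hFi hGi
    simp only [ContinuousLinearMap.mul_apply'] at conv
    rw [← conv]
    refine integral_congr_ae (Filter.Eventually.of_forall fun m => ?_)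
    have : ∀ t : ℝ, (ContinuousLinearMap.mul ℝ ℂ) (F t) (G (m - t))
        = (f t * g (m - t)) * Complex.exp (Complex.I * z * m) := by
      intro t
      simp only [ContinuousLinearMap.mul_apply', hF, hG]
      have he : Complex.exp (Complex.I * z * t) * Complex.exp (Complex.I * z * ((m : ℝ) - t : ℝ))
          = Complex.exp (Complex.I * z * m) := by
        rw [← Complex.exp_add]
        congr 1
        push_cast
        ring
      calc f t * Complex.exp (Complex.I * z * t) *
            (g (m - t) * Complex.exp (Complex.I * z * ((m : ℝ) - t : ℝ)))
          = f t * g (m - t) * (Complex.exp (Complex.I * z * t) *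
              Complex.exp (Complex.I * z * ((m : ℝ) - t : ℝ))) := by ring
        _ = f t * g (m - t) * Complex.exp (Complex.I * z * m) := by rw [he]
    rw [MeasureTheory.convolution_def]
    simp_rw [this]
    rw [integral_mul_const]
    congr 1
    have := MeasureTheory.integral_sub_left_eq_self
      (μ := (volume : Measure ℝ)) (fun t => f t * g (m - t)) m
    simp only [sub_sub_cancel] at this
    exact this.symm
  have rhs : ∫ m : ℝ, ((Real.sqrt (2 * Real.pi) : ℂ)⁻¹ * ∫ y : ℝ, f (m - y) * g y)
        * Complex.exp (Complex.I * z * m)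
      = (Real.sqrt (2 * Real.pi) : ℂ)⁻¹ *
        ∫ m : ℝ, (∫ y : ℝ, f (m - y) * g y) * Complex.exp (Complex.I * z * m) := by
    rw [← integral_const_mul]
    exact integral_congr_ae (Filter.Eventually.of_forall fun m => by ring)
  rw [rhs, ← key]
  ring
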